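/- The biased sample variance operator f(d) = (1/N) ∑_{n=1}^N (d_n - d̄)^2, where d̄ is the sample mean of d, satisfies |f(d) - f(e)| ≤ N^{-1/p} (|d̄ + ē| + d*) ‖d - e‖_p, where d* = max_n |d_n + e_n| and d̄, ē are the respective sample means. -/

import Mathlib

open Finset

/-- The biased sample variance satisfies
`|var d - var e| ≤ N^{-1/p} (|d̄ + ē| + max_n |d_n + e_n|) ‖d - e‖_p`. -/
theorem stmt3 (N : ℕ) [NeZero N] (p : ℝ) (hp : 1 ≤ p) (d e : Fin N → ℝ) :
    |(∑ i, (d i - (∑ j, d j) / N) ^ 2) / N - (∑ i, (e i - (∑ j, e j) / N) ^ 2) / N| ≤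
      (N : ℝ) ^ (-(1 / p)) *
        (|(∑ j, d j) / N + (∑ j, e j) / N| +
          Finset.univ.sup' Finset.univ_nonempty (fun i => |d i + e i|)) *
        (∑ i, |d i - e i| ^ p) ^ (1 / p) := by
  have hN : (0:ℝ) < N := by exact_mod_cast Nat.pos_of_ne_zero (NeZero.ne N)
  have hN' : (N:ℝ) ≠ 0 := ne_of_gt hN
  set D := (∑ j, d j) / (N:ℝ) with hD
  set E := (∑ j, e j) / (N:ℝ) with hE
  set M := Finset.univ.sup' Finset.univ_nonempty (fun i : Fin N => |d i + e i|) with hM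
  set A := |D + E| with hA
  have h1 : (∑ j, d j) = N * D := by rw [hD]; field_simp
  have h2 : (∑ j, e j) = N * E := by rw [hE]; field_simp
  have key : ∑ i, (d i - D)^2 - ∑ i, (e i - E)^2
      = ∑ i, (d i - e i) * (d i + e i - (D+E)) := by
    have hterm : ∀ i : Fin N, (d i - D)^2 - (e i - E)^2
        = (d i - e i)*(d i + e i - (D+E)) + (D-E)*((D+E) - (d i + e i)) := fun i => by ring
    calc ∑ i, (d i - D)^2 - ∑ i, (e i - E)^2
        = ∑ i, ((d i - D)^2 - (e i - E)^2) := (Finset.sum_sub_distrib _ _).symm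
      _ = ∑ i, ((d i - e i)*(d i + e i - (D+E)) + (D-E)*((D+E) - (d i + e i))) := by
          simp_rw [hterm]
      _ = ∑ i, (d i - e i)*(d i + e i - (D+E))
            + (D-E)*((N:ℝ)*(D+E) - (∑ j, d j + ∑ j, e j)) := by
          rw [Finset.sum_add_distrib, ← Finset.mul_sum]
          congr 2
          rw [Finset.sum_sub_distrib, Finset.sum_const, Finset.sum_add_distrib]
          simp [card_univ]
          ring
      _ = ∑ i, (d i - e i)*(d i + e i - (D+E)) := by rw [h1, h2]; ring
  have hMnonneg : (0:ℝ) ≤ M := by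
    have := Finset.le_sup' (fun i : Fin N => |d i + e i|)
      (Finset.mem_univ (Classical.arbitrary (Fin N)))
    exact le_trans (abs_nonneg _) this
  have hAM : (0:ℝ) ≤ A + M := add_nonneg (abs_nonneg _) hMnonneg
  have habs : |∑ i, (d i - e i) * (d i + e i - (D+E))| ≤ (A + M) * ∑ i, |d i - e i| := by
    calc |∑ i, (d i - e i) * (d i + e i - (D+E))|
        ≤ ∑ i, |(d i - e i) * (d i + e i - (D+E))| := Finset.abs_sum_le_sum_abs _ _
      _ ≤ ∑ i, |d i - e i| * (A + M) := by
          refine Finset.sum_le_sum fun i _ => ?_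
          rw [abs_mul]
          refine mul_le_mul_of_nonneg_left ?_ (abs_nonneg _)
          calc |d i + e i - (D+E)| ≤ |d i + e i| + |D+E| := abs_sub _ _
            _ ≤ M + A := add_le_add (Finset.le_sup' (fun i : Fin N => |d i + e i|) (Finset.mem_univ i)) le_rfl
            _ = A + M := add_comm _ _
      _ = (A + M) * ∑ i, |d i - e i| := by rw [← Finset.sum_mul, mul_comm]
  have pm : (∑ i, |d i - e i|) / N ≤ (N:ℝ)^(-(1/p)) * (∑ i, |d i - e i| ^ p) ^ (1/p) := by
    have hmean := Real.arith_mean_le_rpow_mean Finset.univ (fun _ => 1/(N:ℝ))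
      (fun i => |d i - e i|) (fun i _ => by positivity)
      (by rw [Finset.sum_const, card_univ, Fintype.card_fin, nsmul_eq_mul]; field_simp)
      (fun i _ => abs_nonneg _) hp
    rw [← Finset.mul_sum, ← Finset.mul_sum] at hmean
    calc (∑ i, |d i - e i|) / N = (1/(N:ℝ)) * ∑ i, |d i - e i| := by ring
      _ ≤ ((1/(N:ℝ)) * ∑ i, |d i - e i| ^ p) ^ (1/p) := hmean
      _ = (N:ℝ)^(-(1/p)) * (∑ i, |d i - e i| ^ p) ^ (1/p) := by
          rw [Real.mul_rpow (by positivity) (Finset.sum_nonneg fun i _ => by positivity),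
            one_div, Real.inv_rpow hN.le, ← Real.rpow_neg hN.le]
  have lhs_eq : |(∑ i, (d i - D) ^ 2) / N - (∑ i, (e i - E) ^ 2) / N|
      = |∑ i, (d i - e i) * (d i + e i - (D+E))| / N := by
    rw [div_sub_div_same, key, abs_div, abs_of_pos hN]
  calc |(∑ i, (d i - D) ^ 2) / N - (∑ i, (e i - E) ^ 2) / N|
      = |∑ i, (d i - e i) * (d i + e i - (D+E))| / N := lhs_eq
    _ ≤ ((A + M) * ∑ i, |d i - e i|) / N := by
        gcongr
    _ = (A + M) * ((∑ i, |d i - e i|) / N) := by ring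
    _ ≤ (A + M) * ((N:ℝ)^(-(1/p)) * (∑ i, |d i - e i| ^ p) ^ (1/p)) :=
        mul_le_mul_of_nonneg_left pm hAM
    _ = (N:ℝ)^(-(1/p)) * (A + M) * (∑ i, |d i - e i| ^ p) ^ (1/p) := by ring
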